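/- arXiv:1405.5619 — 2 statements merged into one kernel-verified Lean document; each statement's English description precedes it below -/
import Mathlib

section
/- Let {a_n; n ≥ 1} be a sequence of real numbers and {c_n; n ≥ 1} a sequence of positive real numbers with lim_{n→∞} c_n = ∞. Then for a constant −∞ < β < ∞ one has liminf_{n→∞} |a_n|^{1/c_n} = e^β if and only if liminf_{n→∞} |a_n| / e^{b c_n} = 0 for all b > β and liminf_{n→∞} |a_n| / e^{b c_n} = ∞ for all b < β. -/
open Filter Topology

private lemma rpow_lt_exp_iff {x b cn : ℝ} (hx : 0 ≤ x) (hcn : 0 < cn) :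
    x ^ cn⁻¹ < Real.exp b ↔ x < Real.exp (b * cn) := by
  have h : Real.exp b = Real.exp (b * cn) ^ cn⁻¹ := by
    rw [← Real.exp_mul, mul_assoc, mul_inv_cancel₀ hcn.ne', mul_one]
  rw [h, Real.rpow_lt_rpow_iff hx (Real.exp_pos _).le (inv_pos.mpr hcn)]

private lemma exp_lt_rpow_iff {x b cn : ℝ} (hx : 0 ≤ x) (hcn : 0 < cn) :
    Real.exp b < x ^ cn⁻¹ ↔ Real.exp (b * cn) < x := by
  have h : Real.exp b = Real.exp (b * cn) ^ cn⁻¹ := by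
    rw [← Real.exp_mul, mul_assoc, mul_inv_cancel₀ hcn.ne', mul_one]
  rw [h, Real.rpow_lt_rpow_iff (Real.exp_pos _).le hx (inv_pos.mpr hcn)]

private lemma rpow_le_exp_iff {x b cn : ℝ} (hx : 0 ≤ x) (hcn : 0 < cn) :
    x ^ cn⁻¹ ≤ Real.exp b ↔ x ≤ Real.exp (b * cn) := by
  have h : Real.exp b = Real.exp (b * cn) ^ cn⁻¹ := by
    rw [← Real.exp_mul, mul_assoc, mul_inv_cancel₀ hcn.ne', mul_one]
  rw [h, Real.rpow_le_rpow_iff hx (Real.exp_pos _).le (inv_pos.mpr hcn)]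

/-- **Lemma 3.1(ii)** (Li–Chen). For a real sequence `a_n` and positive reals `c_n → ∞`,
and a constant `β ∈ ℝ`: `liminf |a_n|^{1/c_n} = e^β` iff `liminf |a_n|/e^{b c_n} = 0`
for all `b > β` and `liminf |a_n|/e^{b c_n} = ∞` for all `b < β`. -/
theorem stmt_14 (a : ℕ → ℝ) (c : ℕ → ℝ) (hc : ∀ n, 0 < c n)
    (hc' : Tendsto c atTop atTop) (β : ℝ) :
    (Filter.liminf (fun n => ((|a n| ^ (c n)⁻¹ : ℝ) : EReal)) atTop
        = ((Real.exp β : ℝ) : EReal))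
    ↔ ((∀ b : ℝ, β < b →
          Filter.liminf (fun n => ((|a n| / Real.exp (b * c n) : ℝ) : EReal)) atTop
            = ((0 : ℝ) : EReal)) ∧
        (∀ b : ℝ, b < β →
          Filter.liminf (fun n => ((|a n| / Real.exp (b * c n) : ℝ) : EReal)) atTop
            = (⊤ : EReal))) := by
  constructor
  · intro hL
    constructor
    · -- b > β : liminf ratio = 0
      intro b hb
      have hnonneg : ((0 : ℝ) : EReal)
          ≤ liminf (fun n => ((|a n| / Real.exp (b * c n) : ℝ) : EReal)) atTop :=
        le_liminf_of_le (by isBoundedDefault) (Eventually.of_forall fun n => by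
          exact_mod_cast div_nonneg (abs_nonneg _) (Real.exp_pos _).le)
      refine le_antisymm ?_ hnonneg
      apply le_of_forall_gt
      intro d hd
      obtain ⟨ε, hε0, hεd⟩ := EReal.exists_between_coe_real hd
      have hε0' : (0 : ℝ) < ε := by exact_mod_cast hε0
      set b' : ℝ := (β + b) / 2 with hb'
      have hβb' : β < b' := by simp only [hb']; linarith
      have hb'b : b' < b := by simp only [hb']; linarith
      -- frequently |a n| ^ (c n)⁻¹ < exp b'
      have hfreq : ∃ᶠ n in atTop,
          ((|a n| ^ (c n)⁻¹ : ℝ) : EReal) < ((Real.exp b' : ℝ) : EReal) := by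
        apply frequently_lt_of_liminf_lt (by isBoundedDefault)
        rw [hL]
        exact_mod_cast Real.exp_lt_exp.mpr hβb'
      -- eventually exp ((b'-b) * c n) < ε
      have htend : Tendsto (fun n => Real.exp ((b' - b) * c n)) atTop (𝓝 0) := by
        have h1 : Tendsto (fun n => (b - b') * c n) atTop atTop :=
          hc'.const_mul_atTop (by linarith)
        have h2 : Tendsto (fun n => Real.exp ((b - b') * c n)) atTop atTop :=
          Real.tendsto_exp_atTop.comp h1
        have h3 := h2.inv_tendsto_atTop
        refine h3.congr fun n => ?_
        simp only [Pi.inv_apply, ← Real.exp_neg]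
        ring_nf
      have hev : ∀ᶠ n in atTop, Real.exp ((b' - b) * c n) < ε :=
        htend.eventually (gt_mem_nhds hε0')
      refine lt_of_le_of_lt ?_ hεd
      refine liminf_le_of_frequently_le (((hfreq.and_eventually hev)).mono ?_)
        (by isBoundedDefault)
      rintro n ⟨h1, h2⟩
      have h1' : |a n| ^ (c n)⁻¹ < Real.exp b' := by exact_mod_cast h1
      have h3 : |a n| < Real.exp (b' * c n) :=
        (rpow_lt_exp_iff (abs_nonneg _) (hc n)).mp h1'
      have h4 : |a n| / Real.exp (b * c n) < Real.exp ((b' - b) * c n) := by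
        rw [div_lt_iff₀ (Real.exp_pos _), ← Real.exp_add]
        have : (b' - b) * c n + b * c n = b' * c n := by ring
        rwa [this]
      exact_mod_cast (h4.trans h2).le
    · -- b < β : liminf ratio = ⊤
      intro b hb
      by_contra hne
      have hlt : liminf (fun n => ((|a n| / Real.exp (b * c n) : ℝ) : EReal)) atTop < ⊤ :=
        lt_top_iff_ne_top.mpr hne
      obtain ⟨M, hM, -⟩ := EReal.exists_between_coe_real hlt
      set b' : ℝ := (b + β) / 2 with hb'
      have hbb' : b < b' := by simp only [hb']; linarith
      have hb'β : b' < β := by simp only [hb']; linarith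
      have hev1 : ∀ᶠ n in atTop,
          ((Real.exp b' : ℝ) : EReal) < ((|a n| ^ (c n)⁻¹ : ℝ) : EReal) := by
        apply eventually_lt_of_lt_liminf ?_ (by isBoundedDefault)
        rw [hL]
        exact_mod_cast Real.exp_lt_exp.mpr hb'β
      have htend : Tendsto (fun n => Real.exp ((b' - b) * c n)) atTop atTop :=
        Real.tendsto_exp_atTop.comp (hc'.const_mul_atTop (by linarith))
      have hev2 : ∀ᶠ n in atTop, M ≤ Real.exp ((b' - b) * c n) :=
        htend.eventually_ge_atTop M
      have : (M : EReal)
          ≤ liminf (fun n => ((|a n| / Real.exp (b * c n) : ℝ) : EReal)) atTop := by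
        apply le_liminf_of_le (by isBoundedDefault)
        filter_upwards [hev1, hev2] with n h1 h2
        have h1' : Real.exp b' < |a n| ^ (c n)⁻¹ := by exact_mod_cast h1
        have h3 : Real.exp (b' * c n) < |a n| :=
          (exp_lt_rpow_iff (abs_nonneg _) (hc n)).mp h1'
        have h4 : Real.exp ((b' - b) * c n) < |a n| / Real.exp (b * c n) := by
          rw [lt_div_iff₀ (Real.exp_pos _), ← Real.exp_add]
          have : (b' - b) * c n + b * c n = b' * c n := by ring
          rwa [this]
        exact_mod_cast (h2.trans h4.le)
      exact absurd (this.trans_lt hM) (lt_irrefl _)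
  · rintro ⟨h1, h2⟩
    have hnonneg : ((0 : ℝ) : EReal)
        ≤ liminf (fun n => ((|a n| ^ (c n)⁻¹ : ℝ) : EReal)) atTop :=
      le_liminf_of_le (by isBoundedDefault) (Eventually.of_forall fun n => by
        exact_mod_cast Real.rpow_nonneg (abs_nonneg _) _)
    apply le_antisymm
    · -- upper bound : L ≤ exp β
      apply le_of_forall_gt
      intro d hd
      obtain ⟨r, hβr, hrd⟩ := EReal.exists_between_coe_real hd
      have hβr' : Real.exp β < r := by exact_mod_cast hβr
      have hr0 : (0 : ℝ) < r := (Real.exp_pos β).trans hβr'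
      set b : ℝ := Real.log r with hbdef
      have hβb : β < b := (Real.lt_log_iff_exp_lt hr0).mpr hβr'
      have hRb := h1 b hβb
      have hfreq : ∃ᶠ n in atTop,
          ((|a n| / Real.exp (b * c n) : ℝ) : EReal) < ((1 : ℝ) : EReal) := by
        apply frequently_lt_of_liminf_lt (by isBoundedDefault)
        rw [hRb]; exact_mod_cast one_pos
      refine lt_of_le_of_lt ?_ hrd
      refine liminf_le_of_frequently_le (hfreq.mono ?_) (by isBoundedDefault)
      intro n hn
      have hn' : |a n| / Real.exp (b * c n) < 1 := by exact_mod_cast hn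
      have h3 : |a n| < Real.exp (b * c n) :=
        (div_lt_one (Real.exp_pos _)).mp hn'
      have h4 : |a n| ^ (c n)⁻¹ ≤ Real.exp b :=
        (rpow_le_exp_iff (abs_nonneg _) (hc n)).mpr h3.le
      have h5 : Real.exp b = r := Real.exp_log hr0
      exact_mod_cast h4.trans_eq h5
    · -- lower bound : exp β ≤ L
      apply le_of_forall_lt
      intro d hd
      obtain ⟨r, hdr, hrβ⟩ := EReal.exists_between_coe_real hd
      rcases le_or_gt r 0 with hr0 | hr0
      · calc d < (r : EReal) := hdr
          _ ≤ ((0 : ℝ) : EReal) := by exact_mod_cast hr0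
          _ ≤ _ := hnonneg
      · have hrβ' : r < Real.exp β := by exact_mod_cast hrβ
        set b : ℝ := Real.log r with hbdef
        have hbβ : b < β := (Real.log_lt_iff_lt_exp hr0).mpr hrβ'
        have hRb := h2 b hbβ
        have hev : ∀ᶠ n in atTop,
            ((1 : ℝ) : EReal) < ((|a n| / Real.exp (b * c n) : ℝ) : EReal) := by
          apply eventually_lt_of_lt_liminf ?_ (by isBoundedDefault)
          rw [hRb]; exact EReal.coe_lt_top 1
        have : (r : EReal) ≤ liminf (fun n => ((|a n| ^ (c n)⁻¹ : ℝ) : EReal)) atTop := by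
          apply le_liminf_of_le (by isBoundedDefault)
          filter_upwards [hev] with n hn
          have hn' : (1 : ℝ) < |a n| / Real.exp (b * c n) := by exact_mod_cast hn
          have h3 : Real.exp (b * c n) < |a n| := by
            have := (one_lt_div (Real.exp_pos (b * c n))).mp hn'
            exact this
          have h4 : Real.exp b < |a n| ^ (c n)⁻¹ :=
            (exp_lt_rpow_iff (abs_nonneg _) (hc n)).mpr h3
          have h5 : Real.exp b = r := Real.exp_log hr0
          exact_mod_cast (h5 ▸ h4.le)
        exact hdr.trans_le this
end

section
/- Let b ∈ ℝ and let {X_n; n ≥ 1} be a sequence of independent copies of a real-valued random variable X with E( X² / (L|X|)^{2b} ) = ∞, and set S_n = X_1 + ⋯ + X_n. Then limsup_{n→∞} |S_n| / (√n (log n)^b) = ∞ almost surely. -/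
open MeasureTheory ProbabilityTheory Filter

/-- `Lg x = log (max e x)`. -/
noncomputable def Lg (x : ℝ) : ℝ := Real.log (max (Real.exp 1) x)

lemma one_le_Lg (x : ℝ) : 1 ≤ Lg x := by
  unfold Lg
  calc (1:ℝ) = Real.log (Real.exp 1) := (Real.log_exp 1).symm
  _ ≤ _ := Real.log_le_log (Real.exp_pos 1) (le_max_left _ _)
lemma Lg_pos (x : ℝ) : 0 < Lg x := lt_of_lt_of_le one_pos (one_le_Lg x)
lemma Lg_of_le {x : ℝ} (h : Real.exp 1 ≤ x) : Lg x = Real.log x := by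
  unfold Lg; rw [max_eq_right h]
lemma Lg_mono {x y : ℝ} (h : x ≤ y) : Lg x ≤ Lg y := by
  unfold Lg
  exact Real.log_le_log (lt_of_lt_of_le (Real.exp_pos 1) (le_max_left _ _)) (max_le_max le_rfl h)

noncomputable def fB (b : ℝ) (x : ℝ) : ℝ := x ^ 2 / Lg x ^ (2*b)

lemma fB_eq_exp (b : ℝ) {x : ℝ} (hx : Real.exp 1 ≤ x) :
    fB b x = Real.exp (2 * Real.log x - Real.log (Real.log x) * (2*b)) := by
  have hx0 : 0 < x := lt_of_lt_of_le (Real.exp_pos 1) hx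
  have hlx : 1 ≤ Real.log x := by
    calc (1:ℝ) = Real.log (Real.exp 1) := (Real.log_exp 1).symm
    _ ≤ _ := Real.log_le_log (Real.exp_pos 1) hx
  have hlx0 : 0 < Real.log x := lt_of_lt_of_le one_pos hlx
  have h1 : x ^ 2 = Real.exp (2 * Real.log x) := by
    rw [← Real.exp_log hx0, ← Real.exp_nat_mul]
    norm_num
  have h2 : Lg x ^ (2*b) = Real.exp (Real.log (Real.log x) * (2*b)) := by
    rw [Lg_of_le hx, Real.rpow_def_of_pos hlx0]
  rw [fB, h1, h2, ← Real.exp_sub]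

lemma fB_mono (b : ℝ) {x y : ℝ} (hx : Real.exp (max 1 b) ≤ x) (hxy : x ≤ y) :
    fB b x ≤ fB b y := by
  have hex : Real.exp 1 ≤ x := le_trans (Real.exp_le_exp.2 (le_max_left _ _)) hx
  have hey : Real.exp 1 ≤ y := le_trans hex hxy
  rw [fB_eq_exp b hex, fB_eq_exp b hey]
  have hx0 : 0 < x := lt_of_lt_of_le (Real.exp_pos 1) hex
  set t₁ := Real.log x with ht1
  set t₂ := Real.log y with ht2
  have h1 : max 1 b ≤ t₁ := by
    calc max 1 b = Real.log (Real.exp (max 1 b)) := (Real.log_exp _).symm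
    _ ≤ t₁ := Real.log_le_log (Real.exp_pos _) hx
  have h12 : t₁ ≤ t₂ := Real.log_le_log hx0 hxy
  have ht1p : 0 < t₁ := lt_of_lt_of_le one_pos (le_trans (le_max_left _ _) h1)
  apply Real.exp_le_exp.2
  have hlog : Real.log t₂ - Real.log t₁ ≤ (t₂ - t₁) / t₁ := by
    have : Real.log (t₂ / t₁) ≤ t₂ / t₁ - 1 :=
      Real.log_le_sub_one_of_pos (div_pos (lt_of_lt_of_le ht1p h12) ht1p)
    rw [Real.log_div (lt_of_lt_of_le ht1p h12).ne' ht1p.ne'] at this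
    rw [div_sub_one ht1p.ne'] at this
    exact this
  have hlognn : 0 ≤ Real.log t₂ - Real.log t₁ := by
    have := Real.log_le_log ht1p h12; linarith
  rcases le_or_gt b 0 with hb | hb
  · nlinarith
  · have hb1 : b ≤ t₁ := le_trans (le_max_right 1 b) h1
    have : (Real.log t₂ - Real.log t₁) * (2*b) ≤ (t₂ - t₁) / t₁ * (2*b) := by
      apply mul_le_mul_of_nonneg_right hlog; positivity
    have h2 : (t₂ - t₁) / t₁ * (2*b) ≤ 2 * (t₂ - t₁) := by
      rw [div_mul_eq_mul_div, div_le_iff₀ ht1p]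
      nlinarith
    linarith

lemma fB_le_of_le (b : ℝ) {x x₀ : ℝ} (h0 : 0 ≤ x) (hx : x ≤ x₀) :
    fB b x ≤ x₀ ^ 2 / min 1 (Lg x₀ ^ (2*b)) := by
  set m := min 1 (Lg x₀ ^ (2*b)) with hm
  have hmpos : 0 < m := lt_min one_pos (Real.rpow_pos_of_pos (Lg_pos _) _)
  have hden : m ≤ Lg x ^ (2*b) := by
    rcases le_or_gt 0 (2*b) with hb | hb
    · refine le_trans (min_le_left _ _) ?_
      calc (1:ℝ) = 1 ^ (2*b) := (Real.one_rpow _).symm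
      _ ≤ Lg x ^ (2*b) := Real.rpow_le_rpow zero_le_one (one_le_Lg x) hb
    · exact le_trans (min_le_right _ _)
        (Real.rpow_le_rpow_of_nonpos (Lg_pos x) (Lg_mono hx) hb.le)
  apply div_le_div₀ (by positivity) (by nlinarith) hmpos hden


lemma tendsto_rpow_mul_log_rpow {p : ℝ} (hp : 0 < p) (q : ℝ) :
    Tendsto (fun x : ℝ => x ^ p * Real.log x ^ q) atTop atTop := by
  have h2 : 0 < p / 2 := by linarith
  have hlo := (isLittleO_log_rpow_rpow_atTop (-q) h2).bound one_pos
  apply tendsto_atTop_mono' atTop _ (tendsto_rpow_atTop h2)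
  filter_upwards [hlo, eventually_ge_atTop (Real.exp 1), eventually_ge_atTop 1]
    with x hx hex hx1
  have hx0 : (0:ℝ) < x := lt_of_lt_of_le one_pos hx1
  have hlx : 1 ≤ Real.log x := by
    calc (1:ℝ) = Real.log (Real.exp 1) := (Real.log_exp 1).symm
    _ ≤ _ := Real.log_le_log (Real.exp_pos 1) hex
  have hlx0 : 0 < Real.log x := lt_of_lt_of_le one_pos hlx
  have hq : 0 < Real.log x ^ q := Real.rpow_pos_of_pos hlx0 q
  have hinv : (Real.log x ^ q)⁻¹ ≤ x ^ (p/2) := by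
    have h' := hx
    rw [Real.norm_eq_abs, Real.norm_eq_abs, one_mul,
      abs_of_nonneg (Real.rpow_nonneg hlx0.le _),
      abs_of_nonneg (Real.rpow_nonneg hx0.le _), Real.rpow_neg hlx0.le] at h'
    exact h'
  calc x ^ (p/2) = x ^ (p/2) * ((Real.log x ^ q)⁻¹ * Real.log x ^ q) := by
        rw [inv_mul_cancel₀ hq.ne']; ring
  _ ≤ x ^ (p/2) * (x ^ (p/2) * Real.log x ^ q) := by
        have h1 : 0 ≤ x ^ (p/2) := Real.rpow_nonneg hx0.le _
        have := mul_le_mul_of_nonneg_right hinv hq.le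
        nlinarith
  _ = x ^ p * Real.log x ^ q := by
        rw [← mul_assoc, ← Real.rpow_add hx0]; norm_num

lemma tendsto_nat_rpow_mul_log_rpow {p : ℝ} (hp : 0 < p) (q : ℝ) :
    Tendsto (fun n : ℕ => (n:ℝ) ^ p * Real.log n ^ q) atTop atTop :=
  (tendsto_rpow_mul_log_rpow hp q).comp tendsto_natCast_atTop_atTop

lemma integrable_of_tsum_meas_lt {Ω : Type*} [MeasurableSpace Ω] (μ : Measure Ω)
    [IsProbabilityMeasure μ] {Y : Ω → ℝ}
    (hY : Measurable Y) (hYnn : ∀ ω, 0 ≤ Y ω) {K : ℝ} (hK : 0 < K)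
    (h : (∑' n : ℕ, μ {ω | K * n < Y ω}) ≠ ⊤) : Integrable Y μ := by
  have hms : ∀ n : ℕ, MeasurableSet {ω | K * n < Y ω} :=
    fun n => measurableSet_lt measurable_const hY
  refine ⟨hY.aestronglyMeasurable, ?_⟩
  rw [hasFiniteIntegral_iff_ofReal (Eventually.of_forall hYnn)]
  have key : ∀ ω, ENNReal.ofReal (Y ω) ≤
      ∑' n : ℕ, Set.indicator {ω | K * n < Y ω} (fun _ => ENNReal.ofReal K) ω := by
    intro ω
    set m := ⌈Y ω / K⌉₊ with hmdef
    calc ENNReal.ofReal (Y ω) ≤ m * ENNReal.ofReal K := by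
          rw [← ENNReal.ofReal_natCast m, ← ENNReal.ofReal_mul (by positivity)]
          apply ENNReal.ofReal_le_ofReal
          calc Y ω = Y ω / K * K := by field_simp
          _ ≤ m * K := by
            apply mul_le_mul_of_nonneg_right (Nat.le_ceil _) hK.le
    _ = ∑ n ∈ Finset.range m, ENNReal.ofReal K := by
          simp [Finset.sum_const, mul_comm]
    _ = ∑ n ∈ Finset.range m, Set.indicator {ω | K * n < Y ω} (fun _ => ENNReal.ofReal K) ω := by
          apply Finset.sum_congr rfl
          intro n hn
          rw [Set.indicator_of_mem ?_]
          have hn' : (n : ℝ) < Y ω / K := Nat.lt_ceil.1 (Finset.mem_range.1 hn)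
          have : K * n < Y ω := by
            rw [mul_comm]
            exact (lt_div_iff₀ hK).1 hn'
          exact this
    _ ≤ _ := ENNReal.sum_le_tsum _
  calc ∫⁻ ω, ENNReal.ofReal (Y ω) ∂μ
      ≤ ∫⁻ ω, ∑' n : ℕ, Set.indicator {ω | K * n < Y ω} (fun _ => ENNReal.ofReal K) ω ∂μ :=
        lintegral_mono key
  _ = ∑' n : ℕ, ∫⁻ ω, Set.indicator {ω | K * n < Y ω} (fun _ => ENNReal.ofReal K) ω ∂μ :=
        lintegral_tsum (fun n => (measurable_const.indicator (hms n)).aemeasurable)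
  _ = ∑' n : ℕ, ENNReal.ofReal K * μ {ω | K * n < Y ω} := by
        congr 1; funext n
        rw [lintegral_indicator (hms n)]
        simp [mul_comm]
  _ = ENNReal.ofReal K * ∑' n : ℕ, μ {ω | K * n < Y ω} := ENNReal.tsum_mul_left
  _ < ⊤ := ENNReal.mul_lt_top ENNReal.ofReal_lt_top h.lt_top

lemma tail_tsum_top {Ω : Type*} [MeasurableSpace Ω] (μ : Measure Ω) [IsProbabilityMeasure μ]
    (b : ℝ) {Z : Ω → ℝ} (hZ : Measurable Z)
    (hninf : ¬ Integrable (fun ω => (Z ω) ^ 2 / (Lg |Z ω|) ^ (2 * b)) μ)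
    {c : ℝ} (hc : 0 < c) :
    (∑' n : ℕ, μ {ω | c * (Real.sqrt n * Real.log n ^ b) < |Z ω|}) = ⊤ := by
  by_contra h
  apply hninf
  have hYeq : (fun ω => (Z ω) ^ 2 / (Lg |Z ω|) ^ (2 * b)) = fun ω => fB b |Z ω| := by
    funext ω; rw [fB, sq_abs]
  rw [hYeq]
  have hLg : Measurable Lg := Real.measurable_log.comp (measurable_const.max measurable_id)
  have hden : Measurable (fun ω => Lg |Z ω| ^ (2*b)) := by
    have heq : (fun ω => Lg |Z ω| ^ (2*b)) = fun ω => Real.exp (Real.log (Lg |Z ω|) * (2*b)) := by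
      funext ω; rw [Real.rpow_def_of_pos (Lg_pos _)]
    rw [heq]
    exact Real.measurable_exp.comp ((Real.measurable_log.comp (hLg.comp hZ.abs)).mul_const _)
  have hYmeas : Measurable (fun ω => fB b |Z ω|) := by
    unfold fB; exact (hZ.abs.pow_const 2).div hden
  have hYnn : ∀ ω, 0 ≤ fB b |Z ω| := fun ω =>
    div_nonneg (by positivity) (Real.rpow_nonneg (Lg_pos _).le _)
  set x₀ : ℝ := Real.exp (max 1 b) with hx₀def
  have hx₀e : Real.exp 1 ≤ x₀ := Real.exp_le_exp.2 (le_max_left _ _)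
  have he1 : (1:ℝ) ≤ Real.exp 1 := by
    have := Real.add_one_le_exp (1:ℝ); linarith
  set C₀ : ℝ := x₀ ^ 2 / min 1 (Lg x₀ ^ (2*b)) with hC₀def
  set M : ℝ := max 1 ((4:ℝ) ^ (2*b)) with hMdef
  have hM1 : (1:ℝ) ≤ M := le_max_left _ _
  set K : ℝ := c^2 * M with hKdef
  have hK : 0 < K := by
    have : (0:ℝ) < M := lt_of_lt_of_le one_pos hM1
    positivity
  apply integrable_of_tsum_meas_lt μ hYmeas hYnn hK
  -- eventual facts
  have ev0 : ∀ᶠ n : ℕ in atTop, 3 ≤ n := eventually_ge_atTop 3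
  have ev1 : ∀ᶠ n : ℕ in atTop, x₀ ≤ (n:ℝ) ^ ((4:ℝ)⁻¹) :=
    ((tendsto_rpow_atTop (by norm_num : (0:ℝ) < (4:ℝ)⁻¹)).comp
      tendsto_natCast_atTop_atTop).eventually_ge_atTop x₀
  have ev2 : ∀ᶠ n : ℕ in atTop, 1 ≤ c * ((n:ℝ) ^ ((4:ℝ)⁻¹) * Real.log n ^ b) :=
    ((tendsto_nat_rpow_mul_log_rpow (by norm_num : (0:ℝ) < (4:ℝ)⁻¹) b).const_mul_atTop
      hc).eventually_ge_atTop 1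
  have ev3 : ∀ᶠ n : ℕ in atTop, c ≤ (n:ℝ) ^ ((2:ℝ)⁻¹) * Real.log n ^ (-b) :=
    (tendsto_nat_rpow_mul_log_rpow (by norm_num : (0:ℝ) < (2:ℝ)⁻¹) (-b)).eventually_ge_atTop c
  have ev4 : ∀ᶠ n : ℕ in atTop, C₀ ≤ K * n := by
    have : Tendsto (fun n : ℕ => K * (n:ℝ)) atTop atTop :=
      tendsto_natCast_atTop_atTop.const_mul_atTop hK
    exact this.eventually_ge_atTop C₀
  obtain ⟨N₀, hN₀⟩ := eventually_atTop.1 ((((ev0.and ev1).and ev2).and ev3).and ev4)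
  -- the inclusion for n ≥ N₀
  have hsub : ∀ n : ℕ, N₀ ≤ n →
      {ω | K * n < fB b |Z ω|} ⊆ {ω | c * (Real.sqrt n * Real.log n ^ b) < |Z ω|} := by
    intro n hn
    obtain ⟨⟨⟨⟨h3, h1⟩, h2⟩, h3'⟩, h4⟩ := hN₀ n hn
    have hn3 : (3:ℝ) ≤ (n:ℝ) := by exact_mod_cast h3
    have hn0 : (0:ℝ) < n := by linarith
    have hlog1 : 1 ≤ Real.log n := by
      have he3 : Real.exp 1 ≤ 3 := by
        have := Real.exp_one_lt_d9; linarith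
      calc (1:ℝ) = Real.log (Real.exp 1) := (Real.log_exp 1).symm
      _ ≤ Real.log n := Real.log_le_log (Real.exp_pos 1) (le_trans he3 hn3)
    have hlb : 0 < Real.log n := lt_of_lt_of_le one_pos hlog1
    have hlgb : 0 < Real.log n ^ b := Real.rpow_pos_of_pos hlb b
    set A : ℝ := c * (Real.sqrt n * Real.log n ^ b) with hAdef
    have hsq : Real.sqrt n = (n:ℝ) ^ ((2:ℝ)⁻¹) := by
      rw [Real.sqrt_eq_rpow]; norm_num
    have hhalf : (n:ℝ) ^ ((2:ℝ)⁻¹) = (n:ℝ) ^ ((4:ℝ)⁻¹) * (n:ℝ) ^ ((4:ℝ)⁻¹) := by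
      rw [← Real.rpow_add hn0]; norm_num
    have hq4 : (0:ℝ) ≤ (n:ℝ) ^ ((4:ℝ)⁻¹) := Real.rpow_nonneg hn0.le _
    have hA_lb : (n:ℝ) ^ ((4:ℝ)⁻¹) ≤ A := by
      have : A = (n:ℝ) ^ ((4:ℝ)⁻¹) * (c * ((n:ℝ) ^ ((4:ℝ)⁻¹) * Real.log n ^ b)) := by
        rw [hAdef, hsq, hhalf]; ring
      rw [this]
      nlinarith
    have hx₀A : x₀ ≤ A := le_trans h1 hA_lb
    have heA : Real.exp 1 ≤ A := le_trans hx₀e hx₀A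
    have hApos : 0 < A := lt_of_lt_of_le (Real.exp_pos 1) heA
    have hA_ub : A ≤ (n:ℝ) := by
      have hcl : c * Real.log n ^ b ≤ (n:ℝ) ^ ((2:ℝ)⁻¹) := by
        have h5 := h3'
        rw [Real.rpow_neg hlb.le] at h5
        calc c * Real.log n ^ b ≤ ((n:ℝ) ^ ((2:ℝ)⁻¹) * (Real.log n ^ b)⁻¹) * Real.log n ^ b :=
              mul_le_mul_of_nonneg_right h5 hlgb.le
        _ = (n:ℝ) ^ ((2:ℝ)⁻¹) := by field_simp
      have : A = (c * Real.log n ^ b) * (n:ℝ) ^ ((2:ℝ)⁻¹) := by rw [hAdef, hsq]; ring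
      rw [this]
      calc (c * Real.log n ^ b) * (n:ℝ) ^ ((2:ℝ)⁻¹)
          ≤ (n:ℝ) ^ ((2:ℝ)⁻¹) * (n:ℝ) ^ ((2:ℝ)⁻¹) :=
            mul_le_mul_of_nonneg_right hcl (Real.rpow_nonneg hn0.le _)
      _ = (n:ℝ) := by rw [← Real.rpow_add hn0]; norm_num
    have hlogA1 : 1 ≤ Real.log A := by
      calc (1:ℝ) = Real.log (Real.exp 1) := (Real.log_exp 1).symm
      _ ≤ _ := Real.log_le_log (Real.exp_pos 1) heA
    have hlogApos : 0 < Real.log A := lt_of_lt_of_le one_pos hlogA1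
    have hlogA_ub : Real.log A ≤ Real.log n := Real.log_le_log hApos hA_ub
    have hlogA_lb : (4:ℝ)⁻¹ * Real.log n ≤ Real.log A := by
      calc (4:ℝ)⁻¹ * Real.log n = Real.log ((n:ℝ) ^ ((4:ℝ)⁻¹)) := (Real.log_rpow hn0 _).symm
      _ ≤ Real.log A := Real.log_le_log (Real.rpow_pos_of_pos hn0 _) hA_lb
    -- f(A) ≤ K * n
    have hfA : fB b A ≤ K * n := by
      have hA2 : A ^ 2 = c^2 * ((n:ℝ) * Real.log n ^ (2*b)) := by
        have hw : Real.log n ^ b * Real.log n ^ b = Real.log n ^ (2*b) := by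
          rw [← Real.rpow_add hlb]; ring_nf
        have hs2 : Real.sqrt n * Real.sqrt n = (n:ℝ) := Real.mul_self_sqrt hn0.le
        calc A ^ 2 = c^2 * ((Real.sqrt n * Real.sqrt n) * (Real.log n ^ b * Real.log n ^ b)) := by
              rw [hAdef]; ring
        _ = c^2 * ((n:ℝ) * Real.log n ^ (2*b)) := by rw [hw, hs2]
      have hr : Real.log n ^ (2*b) / Real.log A ^ (2*b) ≤ M := by
        rw [← Real.div_rpow hlb.le hlogApos.le]
        set r : ℝ := Real.log n / Real.log A with hrdef
        have hr1 : 1 ≤ r := (one_le_div hlogApos).2 hlogA_ub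
        have hr4 : r ≤ 4 := by
          rw [hrdef, div_le_iff₀ hlogApos]
          linarith
        rcases le_or_gt 0 (2*b) with hb | hb
        · exact le_trans (Real.rpow_le_rpow (by linarith) hr4 hb) (le_max_right _ _)
        · exact le_trans (Real.rpow_le_one_of_one_le_of_nonpos hr1 hb.le) hM1
      have : fB b A = (c^2 * n) * (Real.log n ^ (2*b) / Real.log A ^ (2*b)) := by
        rw [fB, Lg_of_le heA, hA2]
        ring
      rw [this]
      calc (c^2 * n) * (Real.log n ^ (2*b) / Real.log A ^ (2*b)) ≤ (c^2 * n) * M := by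
            apply mul_le_mul_of_nonneg_left hr (by positivity)
      _ = K * n := by rw [hKdef]; ring
    intro ω hω
    simp only [Set.mem_setOf_eq] at hω ⊢
    by_contra hle
    push_neg at hle
    rcases le_or_gt (|Z ω|) x₀ with hcase | hcase
    · have hb1 := fB_le_of_le b (abs_nonneg _) hcase
      have : fB b |Z ω| ≤ C₀ := hb1
      linarith
    · have hb2 := fB_mono b (le_of_lt hcase) hle
      linarith
  -- conclude tsum finite
  have hbound : ∀ n : ℕ, μ {ω | K * n < fB b |Z ω|} ≤
      (if n < N₀ then (1:ENNReal) else 0) +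
        μ {ω | c * (Real.sqrt n * Real.log n ^ b) < |Z ω|} := by
    intro n
    rcases lt_or_ge n N₀ with hn | hn
    · rw [if_pos hn]
      exact le_trans prob_le_one le_self_add
    · rw [if_neg (not_lt.2 hn), zero_add]
      exact measure_mono (hsub n hn)
  have hle : (∑' n : ℕ, μ {ω | K * n < fB b |Z ω|}) ≤
      (∑' n : ℕ, (if n < N₀ then (1:ENNReal) else 0)) +
        ∑' n : ℕ, μ {ω | c * (Real.sqrt n * Real.log n ^ b) < |Z ω|} := by
    rw [← ENNReal.tsum_add]
    exact ENNReal.tsum_le_tsum hbound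
  have hfin : (∑' n : ℕ, (if n < N₀ then (1:ENNReal) else 0)) ≠ ⊤ := by
    rw [tsum_eq_sum (s := Finset.range N₀) (fun n hn => if_neg (by simpa using hn))]
    exact (ENNReal.sum_lt_top.2 (fun n _ => by split <;> simp)).ne
  exact ne_top_of_le_ne_top (ENNReal.add_ne_top.2 ⟨hfin, h⟩) hle
lemma a_doubling (b : ℝ) {n : ℕ} (hn : 2 ≤ n) :
    Real.sqrt ((n:ℝ)+1) * Real.log ((n:ℝ)+1) ^ b ≤
      (Real.sqrt 2 * max 1 ((2:ℝ) ^ b)) * (Real.sqrt n * Real.log n ^ b) := by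
  have hn2 : (2:ℝ) ≤ (n:ℝ) := by exact_mod_cast hn
  have hn0 : (0:ℝ) < (n:ℝ) := by linarith
  have hlogpos : 0 < Real.log n := Real.log_pos (by linarith)
  have h1 : Real.sqrt ((n:ℝ)+1) ≤ Real.sqrt 2 * Real.sqrt n := by
    rw [← Real.sqrt_mul (by norm_num : (0:ℝ) ≤ 2)]
    exact Real.sqrt_le_sqrt (by linarith)
  have hlogle : Real.log ((n:ℝ)+1) ≤ 2 * Real.log n := by
    have hsq : (n:ℝ) + 1 ≤ (n:ℝ) ^ 2 := by nlinarith
    calc Real.log ((n:ℝ)+1) ≤ Real.log ((n:ℝ)^2) := Real.log_le_log (by linarith) hsq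
    _ = 2 * Real.log n := by rw [Real.log_pow]; norm_num
  have h2 : Real.log ((n:ℝ)+1) ^ b ≤ max 1 ((2:ℝ) ^ b) * Real.log n ^ b := by
    rcases le_or_gt 0 b with hb | hb
    · calc Real.log ((n:ℝ)+1) ^ b ≤ (2 * Real.log n) ^ b :=
            Real.rpow_le_rpow (Real.log_nonneg (by linarith)) hlogle hb
      _ = (2:ℝ) ^ b * Real.log n ^ b := Real.mul_rpow (by norm_num) hlogpos.le
      _ ≤ max 1 ((2:ℝ) ^ b) * Real.log n ^ b :=
            mul_le_mul_of_nonneg_right (le_max_right _ _) (Real.rpow_nonneg hlogpos.le _)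
    · have hmono : Real.log ((n:ℝ)+1) ^ b ≤ Real.log n ^ b :=
        Real.rpow_le_rpow_of_nonpos hlogpos (Real.log_le_log hn0 (by linarith)) hb.le
      calc Real.log ((n:ℝ)+1) ^ b ≤ Real.log n ^ b := hmono
      _ ≤ max 1 ((2:ℝ) ^ b) * Real.log n ^ b :=
            le_mul_of_one_le_left (Real.rpow_nonneg hlogpos.le _) (le_max_left _ _)
  calc Real.sqrt ((n:ℝ)+1) * Real.log ((n:ℝ)+1) ^ b
      ≤ (Real.sqrt 2 * Real.sqrt n) * (max 1 ((2:ℝ) ^ b) * Real.log n ^ b) := by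
        apply mul_le_mul h1 h2 (Real.rpow_nonneg (Real.log_nonneg (by linarith)) _) (by positivity)
  _ = (Real.sqrt 2 * max 1 ((2:ℝ) ^ b)) * (Real.sqrt n * Real.log n ^ b) := by ring


/-- **Step (4.3) in the proof of Theorem 2.1** (Li–Chen). For `b ∈ ℝ` and i.i.d. real
random variables `X_n` with `E (X² / (L|X|)^{2b}) = ∞`, one has
`limsup |S_n| / (√n (log n)^b) = ∞` a.s. -/
theorem stmt_19 {Ω : Type*} [MeasurableSpace Ω] (μ : Measure Ω) [IsProbabilityMeasure μ]
    (b : ℝ)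
    (X : ℕ → Ω → ℝ) (hmeas : ∀ n, Measurable (X n))
    (hindep : iIndepFun X μ)
    (hident : ∀ n, IdentDistrib (X n) (X 0) μ μ)
    (hninf : ¬ Integrable (fun ω => (X 0 ω) ^ 2 / (Lg |X 0 ω|) ^ (2 * b)) μ) :
    ∀ᵐ ω ∂μ,
      Filter.limsup (fun n : ℕ =>
        ((|∑ i ∈ Finset.range n, X i ω| / (Real.sqrt n * Real.log n ^ (b : ℝ)) : ℝ) : EReal))
        atTop = (⊤ : EReal) := by
  set D : ℝ := Real.sqrt 2 * max 1 ((2:ℝ) ^ b) with hDdef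
  have hD1 : 1 ≤ D := by
    have h2 : (1:ℝ) ≤ Real.sqrt 2 := by
      rw [show (1:ℝ) = Real.sqrt 1 from (Real.sqrt_one).symm]
      exact Real.sqrt_le_sqrt (by norm_num)
    calc (1:ℝ) = 1 * 1 := by ring
    _ ≤ _ := mul_le_mul h2 (le_max_left _ _) zero_le_one (by positivity)
  have hDpos : 0 < D := lt_of_lt_of_le one_pos hD1
  have hBmeas : ∀ (t : ℝ), MeasurableSet {x : ℝ | t < |x|} :=
    fun t => measurableSet_lt measurable_const measurable_abs
  have hae : ∀ k : ℕ, ∀ᵐ ω ∂μ, ∃ᶠ n : ℕ in atTop,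
      (((k:ℝ)+1) * (2*D)) * (Real.sqrt n * Real.log n ^ b) < |X n ω| := by
    intro k
    set c : ℝ := ((k:ℝ)+1) * (2*D) with hcdef
    have hc : 0 < c := by positivity
    set s : ℕ → Set Ω := fun n => X n ⁻¹' {x : ℝ | c * (Real.sqrt n * Real.log n ^ b) < |x|}
      with hsdef
    have hsmeas : ∀ n, MeasurableSet (s n) := fun n => (hmeas n) (hBmeas _)
    have hsindep : iIndepSet s μ := by
      rw [iIndepSet_iff_meas_biInter hsmeas]
      intro t
      exact hindep.measure_inter_preimage_eq_mul t (fun i _ => hBmeas _)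
    have htsum : (∑' n, μ (s n)) = ⊤ := by
      have heq : ∀ n, μ (s n) =
          μ {ω | c * (Real.sqrt n * Real.log n ^ b) < |X 0 ω|} := by
        intro n
        exact (hident n).measure_mem_eq (hBmeas _)
      calc (∑' n, μ (s n))
          = ∑' n : ℕ, μ {ω | c * (Real.sqrt n * Real.log n ^ b) < |X 0 ω|} := tsum_congr heq
      _ = ⊤ := tail_tsum_top μ b (hmeas 0) hninf hc
    have h1 := measure_limsup_eq_one hsmeas hsindep htsum
    have hmlimsup : MeasurableSet (limsup s atTop) := MeasurableSet.measurableSet_limsup hsmeas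
    have h2 : ∀ᵐ ω ∂μ, ω ∈ limsup s atTop := by
      rw [ae_iff]
      have := measure_compl hmlimsup (measure_ne_top μ _)
      rw [h1, measure_univ] at this
      simp at this
      exact this
    filter_upwards [h2] with ω hω
    rw [mem_limsup_iff_frequently_mem] at hω
    exact hω.mono (fun n hn => hn)
  filter_upwards [ae_all_iff.2 hae] with ω hω
  rw [EReal.eq_top_iff_forall_lt]
  intro y
  obtain ⟨k, hk⟩ := exists_nat_gt y
  refine lt_of_lt_of_le ?_ (le_limsup_of_frequently_le' (x := ((k:ℝ) : EReal)) ?_)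
  · exact_mod_cast hk
  · have hωk := hω k
    rw [frequently_atTop] at hωk ⊢
    rintro N
    obtain ⟨n, hnN, hn⟩ := hωk (max (N+1) 3)
    have hn3 : 3 ≤ n := le_trans (le_max_right _ _) hnN
    have hnN' : N + 1 ≤ n := le_trans (le_max_left _ _) hnN
    have hn3' : (3:ℝ) ≤ (n:ℝ) := by exact_mod_cast hn3
    set S : ℕ → ℝ := fun m => ∑ i ∈ Finset.range m, X i ω with hSdef
    set an : ℝ := Real.sqrt n * Real.log n ^ b with handef
    set an1 : ℝ := Real.sqrt ((n:ℝ)+1) * Real.log ((n:ℝ)+1) ^ b with han1def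
    have hlogpos : 0 < Real.log n := Real.log_pos (by linarith)
    have hapos : 0 < an := by
      apply mul_pos (Real.sqrt_pos.2 (by linarith)) (Real.rpow_pos_of_pos hlogpos b)
    have hapos1 : 0 < an1 := by
      apply mul_pos (Real.sqrt_pos.2 (by linarith)) (Real.rpow_pos_of_pos (Real.log_pos (by linarith)) b)
    have hdbl : an1 ≤ D * an := a_doubling b (by omega)
    have habs : (((k:ℝ)+1) * (2*D)) * an < |S (n+1)| + |S n| := by
      have hXd : X n ω = S (n+1) - S n := by
        rw [hSdef]; simp [Finset.sum_range_succ]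
      calc (((k:ℝ)+1) * (2*D)) * an < |X n ω| := hn
      _ = |S (n+1) - S n| := by rw [hXd]
      _ ≤ |S (n+1)| + |S n| := abs_sub _ _
    rcases le_or_gt (|S (n+1)|) (((k:ℝ)+1) * D * an) with hcase | hcase
    · -- |S n| is big
      refine ⟨n, by omega, ?_⟩
      have hbig : ((k:ℝ)+1) * D * an < |S n| := by nlinarith
      have : ((k:ℝ)+1) * an ≤ ((k:ℝ)+1) * D * an := by
        have h0 : (0:ℝ) ≤ ((k:ℝ)+1) * an := by positivity
        nlinarith [mul_le_mul_of_nonneg_left hD1 h0]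
      have hdiv : (k:ℝ) ≤ |S n| / an := by
        rw [le_div_iff₀ hapos]
        nlinarith
      exact_mod_cast EReal.coe_le_coe_iff.2 hdiv
    · -- |S (n+1)| is big
      refine ⟨n + 1, by omega, ?_⟩
      have hdiv : (k:ℝ) ≤ |S (n+1)| / an1 := by
        have h5 : |S (n+1)| / (D * an) ≤ |S (n+1)| / an1 :=
          div_le_div_of_nonneg_left (abs_nonneg _) hapos1 hdbl
        have h6 : ((k:ℝ)+1) ≤ |S (n+1)| / (D * an) := by
          rw [le_div_iff₀ (by positivity)]
          nlinarith
        linarith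
      have hcast : an1 = Real.sqrt ((n:ℕ)+1 : ℕ) * Real.log ((n:ℕ)+1 : ℕ) ^ b := by
        rw [han1def]; push_cast; ring_nf
      rw [hcast] at hdiv
      exact_mod_cast EReal.coe_le_coe_iff.2 hdiv
end
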